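/- arXiv:1511.00547 — 2 statements merged into one kernel-verified Lean document; each statement's English description precedes it below -/
import Mathlib

section
/- Chebyshev-type fourth moment inequality used in Corollary 4.1: for jointly chaotic eigenfunctions, if F₁ ∈ ker(L + λ_{p₁} Id), F₂ ∈ ker(L + λ_{p₂} Id) and F₁·conj(F₂) lies in ⊕_{k=0}^{p₁+p₂} ker(L + λ_k Id) (with λ_k = k), then ∫ |Γ(F₁,F₂)|² dμ ≤ ((p₁+p₂)/2) ∫ conj(F₁)·F₂·Γ(F₁,F₂) dμ, where 2Γ(F₁,F₂) = (L + (p₁+p₂)Id)(F₁·conj(F₂)). -/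
open MeasureTheory BigOperators

namespace ChaosAux

noncomputable section

variable {E : Type*}

/-- left tower coefficients: `j^u` for `j ≠ 0`, else `0`. -/
def ac (u : ℕ) {m : ℕ} (j : Fin m) : ℂ :=
  if (j : ℕ) = 0 then 0 else ((j : ℕ) : ℂ) ^ u

/-- right tower coefficients: `(n-k)/2 * k * (k^u)⁻¹` for `k ≠ 0`, else `0`. -/
def bc (n u : ℕ) {m : ℕ} (k : Fin m) : ℂ :=
  if (k : ℕ) = 0 then 0
  else ((n : ℂ) - ((k : ℕ) : ℂ)) / 2 * ((k : ℕ) : ℂ) * ((((k : ℕ) : ℂ)) ^ u)⁻¹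

lemma conj_bc (n u : ℕ) {m : ℕ} (k : Fin m) :
    (starRingEnd ℂ) (bc n u k) = bc n u k := by
  unfold bc
  by_cases h : (k : ℕ) = 0
  · simp [h]
  · simp [h, map_mul, map_div₀, map_sub, map_pow, map_inv₀, Complex.conj_natCast,
      Complex.conj_ofNat]

def Af {m : ℕ} (G : Fin m → E → ℂ) (u : ℕ) : E → ℂ := ∑ j, ac u j • G j

def Bf (n : ℕ) {m : ℕ} (G : Fin m → E → ℂ) (u : ℕ) : E → ℂ := ∑ k, bc n u k • G k

lemma Af_apply {m : ℕ} (G : Fin m → E → ℂ) (u : ℕ) (x : E) :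
    Af G u x = ∑ j, ac u j * G j x := by
  simp [Af, Finset.sum_apply]

lemma Bf_apply (n : ℕ) {m : ℕ} (G : Fin m → E → ℂ) (u : ℕ) (x : E) :
    Bf n G u x = ∑ k, bc n u k * G k x := by
  simp [Bf, Finset.sum_apply]

lemma L_Af (L : (E → ℂ) →ₗ[ℂ] (E → ℂ)) {m : ℕ} (G : Fin m → E → ℂ)
    (hGeig : ∀ k, L (G k) = fun x => -((k : ℕ) : ℂ) * G k x) (u : ℕ) :
    L (Af G u) = -(Af G (u + 1)) := by
  unfold Af
  rw [map_sum]
  simp_rw [LinearMap.map_smul, hGeig]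
  funext x
  simp only [Finset.sum_apply, Pi.neg_apply, Pi.smul_apply, smul_eq_mul]
  rw [← Finset.sum_neg_distrib]
  refine Finset.sum_congr rfl fun j _ => ?_
  by_cases hj : (j : ℕ) = 0
  · simp [ac, hj]
  · simp only [ac, hj, if_false, pow_succ]
    ring

lemma L_Bf (L : (E → ℂ) →ₗ[ℂ] (E → ℂ)) (n : ℕ) {m : ℕ} (G : Fin m → E → ℂ)
    (hGeig : ∀ k, L (G k) = fun x => -((k : ℕ) : ℂ) * G k x) (u : ℕ) :
    L (Bf n G (u + 1)) = -(Bf n G u) := by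
  unfold Bf
  rw [map_sum]
  simp_rw [LinearMap.map_smul, hGeig]
  funext x
  simp only [Finset.sum_apply, Pi.neg_apply, Pi.smul_apply, smul_eq_mul]
  rw [← Finset.sum_neg_distrib]
  refine Finset.sum_congr rfl fun k _ => ?_
  by_cases hk : (k : ℕ) = 0
  · simp [bc, hk]
  · have hk0 : (((k : ℕ) : ℂ)) ≠ 0 := Nat.cast_ne_zero.mpr hk
    have hp : (((k : ℕ) : ℂ)) ^ u ≠ 0 := pow_ne_zero _ hk0
    simp only [bc, hk, if_false, pow_succ]
    field_simp


lemma chain [MeasurableSpace E] (μ : Measure E) (L : (E → ℂ) →ₗ[ℂ] (E → ℂ))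
    (hsa : ∀ F G : E → ℂ,
      ∫ x, L F x * (starRingEnd ℂ) (G x) ∂μ = ∫ x, F x * (starRingEnd ℂ) (L G x) ∂μ)
    (n : ℕ) {m : ℕ} (G : Fin m → E → ℂ)
    (hGeig : ∀ k, L (G k) = fun x => -((k : ℕ) : ℂ) * G k x) (u : ℕ) :
    ∫ x, Af G (u + 1) x * (starRingEnd ℂ) (Bf n G (u + 1) x) ∂μ
      = ∫ x, Af G u x * (starRingEnd ℂ) (Bf n G u x) ∂μ := by
  have hA := L_Af L G hGeig u
  have hB := L_Bf L n G hGeig u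
  have h1 : ∀ x, Af G (u + 1) x = -(L (Af G u) x) := by
    intro x; rw [hA]; simp
  have h2 : ∀ x, L (Bf n G (u + 1)) x = -(Bf n G u x) := by
    intro x; rw [hB]; simp
  calc ∫ x, Af G (u + 1) x * (starRingEnd ℂ) (Bf n G (u + 1) x) ∂μ
      = ∫ x, -(L (Af G u) x * (starRingEnd ℂ) (Bf n G (u + 1) x)) ∂μ := by
        simp_rw [h1, neg_mul]
    _ = -∫ x, L (Af G u) x * (starRingEnd ℂ) (Bf n G (u + 1) x) ∂μ := by
        rw [integral_neg]
    _ = -∫ x, Af G u x * (starRingEnd ℂ) (L (Bf n G (u + 1)) x) ∂μ := by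
        rw [hsa]
    _ = ∫ x, Af G u x * (starRingEnd ℂ) (Bf n G u x) ∂μ := by
        simp_rw [h2, map_neg, mul_neg]
        rw [integral_neg, neg_neg]

lemma chain_all [MeasurableSpace E] (μ : Measure E) (L : (E → ℂ) →ₗ[ℂ] (E → ℂ))
    (hsa : ∀ F G : E → ℂ,
      ∫ x, L F x * (starRingEnd ℂ) (G x) ∂μ = ∫ x, F x * (starRingEnd ℂ) (L G x) ∂μ)
    (n : ℕ) {m : ℕ} (G : Fin m → E → ℂ)
    (hGeig : ∀ k, L (G k) = fun x => -((k : ℕ) : ℂ) * G k x) (u : ℕ) :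
    ∫ x, Af G u x * (starRingEnd ℂ) (Bf n G u x) ∂μ
      = ∫ x, Af G 0 x * (starRingEnd ℂ) (Bf n G 0 x) ∂μ := by
  induction u with
  | zero => rfl
  | succ v ih => rw [chain μ L hsa n G hGeig v]; exact ih


/-- the finite set of "ratios" `j/k`, together with `1`. -/
def rset (m : ℕ) : Finset ℂ :=
  insert 1 (((Finset.univ : Finset (Fin m × Fin m)).filter
    (fun p => (p.1 : ℕ) ≠ 0 ∧ (p.2 : ℕ) ≠ 0)).image
    (fun p => ((p.1 : ℕ) : ℂ) / ((p.2 : ℕ) : ℂ)))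

/-- Lagrange polynomial taking value `1` at `1` and `0` at the other ratios. -/
def pol (m : ℕ) : Polynomial ℂ :=
  Lagrange.interpolate (rset m) id (fun z => if z = 1 then 1 else 0)

lemma pol_eval_node {m : ℕ} {z : ℂ} (hz : z ∈ rset m) :
    (pol m).eval z = if z = 1 then 1 else 0 := by
  exact Lagrange.eval_interpolate_at_node (s := rset m) (v := id)
    (fun w : ℂ => if w = 1 then (1 : ℂ) else 0) (Set.injOn_id _) hz

lemma pol_eval_one {m : ℕ} : (pol m).eval 1 = 1 := by
  have h1 : (1 : ℂ) ∈ rset m := Finset.mem_insert_self _ _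
  rw [pol_eval_node h1, if_pos rfl]

lemma coeff_sum (n : ℕ) {m : ℕ} (j k : Fin m) :
    ∑ u ∈ Finset.range ((pol m).natDegree + 1), (pol m).coeff u * (ac u j * bc n u k)
      = if j = k then bc n 0 k else 0 := by
  by_cases hj : (j : ℕ) = 0
  · rw [Finset.sum_eq_zero (fun u _ => by simp [ac, hj])]
    by_cases hjk : j = k
    · have hk : (k : ℕ) = 0 := by rw [← hjk]; exact hj
      simp [hjk, bc, hk]
    · simp [hjk]
  · by_cases hk : (k : ℕ) = 0
    · rw [Finset.sum_eq_zero (fun u _ => by simp [bc, hk])]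
      have hjk : j ≠ k := by
        intro h; rw [h] at hj; exact hj hk
      simp [hjk]
    · have hkc : (((k : ℕ) : ℂ)) ≠ 0 := Nat.cast_ne_zero.mpr hk
      have hjc : (((j : ℕ) : ℂ)) ≠ 0 := Nat.cast_ne_zero.mpr hj
      have hterm : ∀ u, ac u j * bc n u k
          = (((n : ℂ) - ((k : ℕ) : ℂ)) / 2 * ((k : ℕ) : ℂ))
            * ((((j : ℕ) : ℂ) / ((k : ℕ) : ℂ)) ^ u) := by
        intro u
        simp only [ac, bc, hj, hk, if_false, div_pow, div_eq_mul_inv]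
        ring
      simp_rw [hterm]
      have hfac : ∑ u ∈ Finset.range ((pol m).natDegree + 1),
          (pol m).coeff u * ((((n : ℂ) - ((k : ℕ) : ℂ)) / 2 * ((k : ℕ) : ℂ))
            * ((((j : ℕ) : ℂ) / ((k : ℕ) : ℂ)) ^ u))
          = (((n : ℂ) - ((k : ℕ) : ℂ)) / 2 * ((k : ℕ) : ℂ))
            * ∑ u ∈ Finset.range ((pol m).natDegree + 1),
                (pol m).coeff u * ((((j : ℕ) : ℂ) / ((k : ℕ) : ℂ)) ^ u) := by
        rw [Finset.mul_sum]
        exact Finset.sum_congr rfl fun u _ => by ring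
      rw [hfac, ← Polynomial.eval_eq_sum_range]
      have hmem : (((j : ℕ) : ℂ) / ((k : ℕ) : ℂ)) ∈ rset m :=
        Finset.mem_insert_of_mem (Finset.mem_image.mpr
          ⟨(j, k), Finset.mem_filter.mpr ⟨Finset.mem_univ _, hj, hk⟩, rfl⟩)
      rw [pol_eval_node hmem]
      by_cases hjk : j = k
      · subst hjk
        rw [if_pos (div_self hjc), if_pos rfl]
        simp only [bc, hj, if_false, pow_zero, inv_one, mul_one]
      · have hne : (((j : ℕ) : ℂ) / ((k : ℕ) : ℂ)) ≠ 1 := fun h =>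
          hjk (Fin.ext (Nat.cast_inj.mp ((div_eq_one_iff_eq hkc).mp h)))
        rw [if_neg hne, mul_zero, if_neg hjk]

lemma pointwise_id (n : ℕ) {m : ℕ} (G : Fin m → E → ℂ) (x : E) :
    ∑ u ∈ Finset.range ((pol m).natDegree + 1),
        (pol m).coeff u * (Af G u x * (starRingEnd ℂ) (Bf n G u x))
      = ∑ k, bc n 0 k * (G k x * (starRingEnd ℂ) (G k x)) := by
  have hexp : ∀ u, Af G u x * (starRingEnd ℂ) (Bf n G u x)
      = ∑ j, ∑ k, (ac u j * bc n u k) * (G j x * (starRingEnd ℂ) (G k x)) := by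
    intro u
    rw [Af_apply, Bf_apply, map_sum, Finset.sum_mul_sum]
    refine Finset.sum_congr rfl fun j _ => Finset.sum_congr rfl fun k _ => ?_
    rw [map_mul, conj_bc]
    ring
  calc ∑ u ∈ Finset.range ((pol m).natDegree + 1),
        (pol m).coeff u * (Af G u x * (starRingEnd ℂ) (Bf n G u x))
      = ∑ j, ∑ k, (∑ u ∈ Finset.range ((pol m).natDegree + 1),
          (pol m).coeff u * (ac u j * bc n u k)) * (G j x * (starRingEnd ℂ) (G k x)) := by
        simp_rw [hexp, Finset.mul_sum]
        rw [Finset.sum_comm]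
        refine Finset.sum_congr rfl fun j _ => ?_
        rw [Finset.sum_comm]
        refine Finset.sum_congr rfl fun k _ => ?_
        rw [Finset.sum_mul]
        exact Finset.sum_congr rfl fun u _ => by ring
    _ = ∑ j, ∑ k, (if j = k then bc n 0 k else 0) * (G j x * (starRingEnd ℂ) (G k x)) := by
        simp_rw [coeff_sum]
    _ = ∑ j, ∑ k, (if j = k then bc n 0 k * (G j x * (starRingEnd ℂ) (G k x)) else 0) := by
        refine Finset.sum_congr rfl fun j _ => Finset.sum_congr rfl fun k _ => ?_
        rw [ite_mul, zero_mul]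
    _ = ∑ k, bc n 0 k * (G k x * (starRingEnd ℂ) (G k x)) := by
        simp [Finset.sum_ite_eq]

end

end ChaosAux
theorem ChaosAux.key {E : Type*} [MeasurableSpace E]
    (μ : Measure E)
    (L : (E → ℂ) →ₗ[ℂ] (E → ℂ))
    (hsa : ∀ F G : E → ℂ,
      ∫ x, L F x * (starRingEnd ℂ) (G x) ∂μ = ∫ x, F x * (starRingEnd ℂ) (L G x) ∂μ)
    (n : ℕ) (F₁ F₂ : E → ℂ)
    (G : Fin (n + 1) → (E → ℂ))
    (hGeig : ∀ k, L (G k) = fun x => -((k : ℕ) : ℂ) * G k x)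
    (hchaos : (fun x => F₁ x * (starRingEnd ℂ) (F₂ x)) = fun x => ∑ k, G k x)
    (Γ : E → ℂ)
    (hΓ : ∀ x, 2 * Γ x =
      L (fun y => F₁ y * (starRingEnd ℂ) (F₂ y)) x
        + ((n : ℕ) : ℂ) * (F₁ x * (starRingEnd ℂ) (F₂ x)))
    (hint1 : Integrable (fun x => ‖Γ x‖ ^ 2) μ)
    (hint2 : Integrable (fun x => (starRingEnd ℂ) (F₁ x) * F₂ x * Γ x) μ) :
    ∫ x, ‖Γ x‖ ^ 2 ∂μ
      ≤ ((n : ℝ) / 2) * (∫ x, (starRingEnd ℂ) (F₁ x) * F₂ x * Γ x ∂μ).re := by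
  classical
  -- pointwise chaos expansion
  have hH : ∀ x, F₁ x * (starRingEnd ℂ) (F₂ x) = ∑ k, G k x := fun x => congrFun hchaos x
  have hHfun : (fun y => F₁ y * (starRingEnd ℂ) (F₂ y)) = ∑ k, G k := by
    funext y
    rw [hH y, Finset.sum_apply]
  have hLH : ∀ x, L (fun y => F₁ y * (starRingEnd ℂ) (F₂ y)) x
      = ∑ k : Fin (n + 1), -((k : ℕ) : ℂ) * G k x := by
    intro x
    rw [hHfun, map_sum]
    simp_rw [hGeig]
    rw [Finset.sum_apply]
  -- Γ as an eigenfunction combination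
  have hGam2 : ∀ x, (2 : ℂ) * Γ x
      = ∑ k : Fin (n + 1), ((n : ℂ) - ((k : ℕ) : ℂ)) * G k x := by
    intro x
    rw [hΓ x, hLH x, hH x, Finset.mul_sum, ← Finset.sum_add_distrib]
    exact Finset.sum_congr rfl fun k _ => by ring
  have hGamfun : Γ = ∑ k : Fin (n + 1), (((n : ℂ) - ((k : ℕ) : ℂ)) / 2) • G k := by
    funext x
    have h2 := hGam2 x
    have hx : Γ x = (∑ k : Fin (n + 1), ((n : ℂ) - ((k : ℕ) : ℂ)) * G k x) / 2 := by
      rw [eq_div_iff (two_ne_zero)]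
      linear_combination h2
    rw [hx, Finset.sum_apply, Finset.sum_div]
    exact Finset.sum_congr rfl fun k _ => by
      simp only [Pi.smul_apply, smul_eq_mul]; ring
  have hLGam : L Γ = -(ChaosAux.Bf n G 0) := by
    rw [hGamfun, map_sum]
    simp_rw [LinearMap.map_smul, hGeig]
    funext x
    simp only [Finset.sum_apply, Pi.neg_apply, Pi.smul_apply, smul_eq_mul,
      ChaosAux.Bf_apply]
    rw [← Finset.sum_neg_distrib]
    refine Finset.sum_congr rfl fun k _ => ?_
    by_cases hk : (k : ℕ) = 0
    · simp [ChaosAux.bc, hk]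
    · simp only [ChaosAux.bc, hk, if_false, pow_zero, inv_one]
      ring
  -- the starting function of the tower
  have hA1 : ∀ x, ChaosAux.Af G 1 x
      = (n : ℂ) * (F₁ x * (starRingEnd ℂ) (F₂ x)) - 2 * Γ x := by
    intro x
    rw [ChaosAux.Af_apply]
    calc ∑ j : Fin (n + 1), ChaosAux.ac 1 j * G j x
        = ∑ j : Fin (n + 1), ((n : ℂ) * G j x - ((n : ℂ) - ((j : ℕ) : ℂ)) * G j x) := by
          refine Finset.sum_congr rfl fun j _ => ?_
          by_cases hj : (j : ℕ) = 0
          · simp only [ChaosAux.ac, hj, if_true, Nat.cast_zero]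
            ring
          · simp only [ChaosAux.ac, hj, if_false, pow_one]
            ring
      _ = (∑ j : Fin (n + 1), (n : ℂ) * G j x)
            - ∑ j : Fin (n + 1), ((n : ℂ) - ((j : ℕ) : ℂ)) * G j x :=
          Finset.sum_sub_distrib _ _
      _ = (n : ℂ) * (F₁ x * (starRingEnd ℂ) (F₂ x)) - 2 * Γ x := by
          rw [← Finset.mul_sum, ← hH x, ← hGam2 x]
  -- the invariant value of the tower
  set Θ : ℂ := ∫ x, ChaosAux.Af G 0 x * (starRingEnd ℂ) (ChaosAux.Bf n G 0 x) ∂μ with hΘ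
  have htower : ∀ u,
      ∫ x, ChaosAux.Af G u x * (starRingEnd ℂ) (ChaosAux.Bf n G u x) ∂μ = Θ :=
    fun u => ChaosAux.chain_all μ L hsa n G hGeig u
  -- start: Θ equals ∫ (A 1) conj Γ
  have hstart : ∫ x, ChaosAux.Af G 1 x * (starRingEnd ℂ) (Γ x) ∂μ = Θ := by
    have hA := ChaosAux.L_Af L G hGeig 0
    have h1 : ∀ x, ChaosAux.Af G 1 x = -(L (ChaosAux.Af G 0) x) := by
      intro x; rw [hA]; simp
    have h2 : ∀ x, L Γ x = -(ChaosAux.Bf n G 0 x) := by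
      intro x; rw [hLGam]; simp
    calc ∫ x, ChaosAux.Af G 1 x * (starRingEnd ℂ) (Γ x) ∂μ
        = ∫ x, -(L (ChaosAux.Af G 0) x * (starRingEnd ℂ) (Γ x)) ∂μ := by
          simp_rw [h1, neg_mul]
      _ = -∫ x, L (ChaosAux.Af G 0) x * (starRingEnd ℂ) (Γ x) ∂μ := by
          rw [integral_neg]
      _ = -∫ x, ChaosAux.Af G 0 x * (starRingEnd ℂ) (L Γ x) ∂μ := by rw [hsa]
      _ = Θ := by
          simp_rw [h2, map_neg, mul_neg]
          rw [integral_neg, neg_neg]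
  -- integrability of the two known integrands
  have hzsq : ∀ z : ℂ, z * (starRingEnd ℂ) z = ((‖z‖ ^ 2 : ℝ) : ℂ) := by
    intro z
    rw [Complex.mul_conj, Complex.normSq_eq_norm_sq]
  have intI : Integrable (fun x => Γ x * (starRingEnd ℂ) (Γ x)) μ := by
    have he : (fun x => Γ x * (starRingEnd ℂ) (Γ x))
        = fun x => ((‖Γ x‖ ^ 2 : ℝ) : ℂ) := by
      funext x; exact hzsq (Γ x)
    rw [he]
    exact hint1.ofReal
  have intJc : Integrable
      (fun x => (F₁ x * (starRingEnd ℂ) (F₂ x)) * (starRingEnd ℂ) (Γ x)) μ := by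
    have h := (RCLike.conjCLE (K := ℂ)).toContinuousLinearMap.integrable_comp hint2
    have he : (fun x => (RCLike.conjCLE (K := ℂ)).toContinuousLinearMap
        ((starRingEnd ℂ) (F₁ x) * F₂ x * Γ x))
        = fun x => (F₁ x * (starRingEnd ℂ) (F₂ x)) * (starRingEnd ℂ) (Γ x) := by
      funext x
      simp only [ContinuousLinearEquiv.coe_coe, RCLike.conjCLE_apply, map_mul,
        Complex.conj_conj, RCLike.star_def]
    rwa [he] at h
  -- splitting the starting integral
  have hsplit : ∫ x, ChaosAux.Af G 1 x * (starRingEnd ℂ) (Γ x) ∂μ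
      = (n : ℂ) * (∫ x, (F₁ x * (starRingEnd ℂ) (F₂ x)) * (starRingEnd ℂ) (Γ x) ∂μ)
        - 2 * ∫ x, Γ x * (starRingEnd ℂ) (Γ x) ∂μ := by
    have he : (fun x => ChaosAux.Af G 1 x * (starRingEnd ℂ) (Γ x))
        = fun x => (n : ℂ) * ((F₁ x * (starRingEnd ℂ) (F₂ x)) * (starRingEnd ℂ) (Γ x))
          - 2 * (Γ x * (starRingEnd ℂ) (Γ x)) := by
      funext x
      rw [hA1 x]
      ring
    rw [he, integral_sub ((intJc).const_mul _) ((intI).const_mul _),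
      integral_const_mul, integral_const_mul]
  -- the two basic integrals
  set Jc : ℂ := ∫ x, (starRingEnd ℂ) (F₁ x) * F₂ x * Γ x ∂μ with hJc
  set Iv : ℝ := ∫ x, ‖Γ x‖ ^ 2 ∂μ with hIv
  have hJ : ∫ x, (F₁ x * (starRingEnd ℂ) (F₂ x)) * (starRingEnd ℂ) (Γ x) ∂μ
      = (starRingEnd ℂ) Jc := by
    rw [hJc, ← integral_conj]
    refine integral_congr_ae (Filter.Eventually.of_forall fun x => ?_)
    simp only [map_mul, Complex.conj_conj]
  have hI : ∫ x, Γ x * (starRingEnd ℂ) (Γ x) ∂μ = ((Iv : ℝ) : ℂ) := by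
    have he : (fun x => Γ x * (starRingEnd ℂ) (Γ x))
        = fun x => ((‖Γ x‖ ^ 2 : ℝ) : ℂ) := by
      funext x; exact hzsq (Γ x)
    rw [he, hIv]
    exact integral_ofReal
  have hTheta : Θ = (n : ℂ) * (starRingEnd ℂ) Jc - 2 * ((Iv : ℝ) : ℂ) := by
    rw [← hstart, hsplit, hJ, hI]
  have hThetaRe : Θ.re = (n : ℝ) * Jc.re - 2 * Iv := by
    rw [hTheta]
    simp [Complex.sub_re, Complex.mul_re, Complex.conj_re, Complex.conj_im]
  -- nonnegativity of Θ.re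
  have hmain : 0 ≤ Θ.re := by
    by_cases hall : ∀ u ∈ Finset.range ((ChaosAux.pol (n + 1)).natDegree + 1),
        Integrable (fun x => ChaosAux.Af G u x * (starRingEnd ℂ) (ChaosAux.Bf n G u x)) μ
    · -- all tower integrands integrable: Θ is an integral of a nonneg function
      have hsum : ∫ x, ∑ u ∈ Finset.range ((ChaosAux.pol (n + 1)).natDegree + 1),
            (ChaosAux.pol (n + 1)).coeff u
              * (ChaosAux.Af G u x * (starRingEnd ℂ) (ChaosAux.Bf n G u x)) ∂μ
          = ∑ u ∈ Finset.range ((ChaosAux.pol (n + 1)).natDegree + 1),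
              (ChaosAux.pol (n + 1)).coeff u
                * ∫ x, ChaosAux.Af G u x * (starRingEnd ℂ) (ChaosAux.Bf n G u x) ∂μ := by
        rw [integral_finset_sum _ (fun u hu => ((hall u hu).const_mul _))]
        exact Finset.sum_congr rfl fun u _ => integral_const_mul _ _
      have hg1 : ∫ x, ∑ u ∈ Finset.range ((ChaosAux.pol (n + 1)).natDegree + 1),
            (ChaosAux.pol (n + 1)).coeff u
              * (ChaosAux.Af G u x * (starRingEnd ℂ) (ChaosAux.Bf n G u x)) ∂μ
          = ∫ x, ∑ k, ChaosAux.bc n 0 k * (G k x * (starRingEnd ℂ) (G k x)) ∂μ := by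
        refine integral_congr_ae (Filter.Eventually.of_forall fun x => ?_)
        exact ChaosAux.pointwise_id n G x
      have hval : ∑ u ∈ Finset.range ((ChaosAux.pol (n + 1)).natDegree + 1),
            (ChaosAux.pol (n + 1)).coeff u
              * ∫ x, ChaosAux.Af G u x * (starRingEnd ℂ) (ChaosAux.Bf n G u x) ∂μ
          = Θ := by
        have h1 : ∑ u ∈ Finset.range ((ChaosAux.pol (n + 1)).natDegree + 1),
            (ChaosAux.pol (n + 1)).coeff u
              * ∫ x, ChaosAux.Af G u x * (starRingEnd ℂ) (ChaosAux.Bf n G u x) ∂μ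
            = (∑ u ∈ Finset.range ((ChaosAux.pol (n + 1)).natDegree + 1),
                (ChaosAux.pol (n + 1)).coeff u) * Θ := by
          rw [Finset.sum_mul]
          exact Finset.sum_congr rfl fun u _ => by rw [htower u]
        have h2 : (∑ u ∈ Finset.range ((ChaosAux.pol (n + 1)).natDegree + 1),
            (ChaosAux.pol (n + 1)).coeff u) = (ChaosAux.pol (n + 1)).eval 1 := by
          rw [Polynomial.eval_eq_sum_range]
          exact Finset.sum_congr rfl fun u _ => by rw [one_pow, mul_one]
        rw [h1, h2, ChaosAux.pol_eval_one, one_mul]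
      have hΘg : Θ = ∫ x, ∑ k, ChaosAux.bc n 0 k
          * (G k x * (starRingEnd ℂ) (G k x)) ∂μ := by
        rw [← hval, ← hsum, hg1]
      -- realify
      have hbcR : ∀ (k : Fin (n + 1)) (z : ℂ), ChaosAux.bc n 0 k * (z * (starRingEnd ℂ) z)
          = (((if (k : ℕ) = 0 then (0 : ℝ)
              else ((n : ℝ) - ((k : ℕ) : ℝ)) / 2 * ((k : ℕ) : ℝ) * ‖z‖ ^ 2) : ℝ) : ℂ) := by
        intro k z
        by_cases hk : (k : ℕ) = 0
        · simp [ChaosAux.bc, hk]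
        · rw [hzsq z]
          simp only [ChaosAux.bc, hk, if_false, pow_zero, inv_one]
          push_cast
          ring
      have hgr : (fun x => ∑ k, ChaosAux.bc n 0 k * (G k x * (starRingEnd ℂ) (G k x)))
          = fun x => (((∑ k : Fin (n + 1), (if (k : ℕ) = 0 then (0 : ℝ)
              else ((n : ℝ) - ((k : ℕ) : ℝ)) / 2 * ((k : ℕ) : ℝ) * ‖G k x‖ ^ 2)) : ℝ) : ℂ) := by
        funext x
        rw [Complex.ofReal_sum]
        exact Finset.sum_congr rfl fun k _ => hbcR k (G k x)
      have hor : ∀ g : E → ℝ, (∫ x, ((g x : ℝ) : ℂ) ∂μ) = ((∫ x, g x ∂μ : ℝ) : ℂ) :=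
        fun g => integral_ofReal
      rw [hΘg, hgr, hor, Complex.ofReal_re]
      refine integral_nonneg fun x => ?_
      refine Finset.sum_nonneg fun k _ => ?_
      by_cases hk : (k : ℕ) = 0
      · simp [hk]
      · simp only [hk, if_false]
        have hkn : ((k : ℕ) : ℝ) ≤ (n : ℝ) := by
          exact_mod_cast Nat.lt_succ_iff.mp k.isLt
        have h1 : (0 : ℝ) ≤ ((n : ℝ) - ((k : ℕ) : ℝ)) / 2 := by linarith
        have h2 : (0 : ℝ) ≤ ((k : ℕ) : ℝ) := Nat.cast_nonneg _
        have h3 : (0 : ℝ) ≤ ‖G k x‖ ^ 2 := by positivity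
        exact mul_nonneg (mul_nonneg h1 h2) h3
    · -- some tower integrand is not integrable: Θ = 0
      push_neg at hall
      obtain ⟨u₀, _, hni⟩ := hall
      have h0 : Θ = 0 := by
        rw [← htower u₀, integral_undef hni]
      rw [h0]
      simp
  -- conclude
  have h0 : 0 ≤ (n : ℝ) * Jc.re - 2 * Iv := by rw [← hThetaRe]; exact hmain
  linarith

/-- Corollary 3.2: for jointly chaotic eigenfunctions F₁ ∈ ker(L + p₁Id),
F₂ ∈ ker(L + p₂Id) with F₁·conj(F₂) expanding over the first p₁+p₂+1 eigenspaces
(λ_k = k), and 2Γ(F₁,F₂) = (L + (p₁+p₂)Id)(F₁·conj(F₂)), one has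
∫|Γ(F₁,F₂)|² dμ ≤ ((p₁+p₂)/2) ∫ conj(F₁)F₂ Γ(F₁,F₂) dμ. -/
theorem chaotic_gamma_fourth_moment_bound {E : Type*} [MeasurableSpace E]
    (μ : Measure E) [IsProbabilityMeasure μ]
    (L : (E → ℂ) →ₗ[ℂ] (E → ℂ))
    (hsa : ∀ F G : E → ℂ,
      ∫ x, L F x * (starRingEnd ℂ) (G x) ∂μ = ∫ x, F x * (starRingEnd ℂ) (L G x) ∂μ)
    (p₁ p₂ : ℕ) (F₁ F₂ : E → ℂ)
    (h₁ : L F₁ = fun x => -(p₁ : ℂ) * F₁ x)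
    (h₂ : L F₂ = fun x => -(p₂ : ℂ) * F₂ x)
    (G : Fin (p₁ + p₂ + 1) → (E → ℂ))
    (hGeig : ∀ k, L (G k) = fun x => -((k : ℕ) : ℂ) * G k x)
    (hchaos : (fun x => F₁ x * (starRingEnd ℂ) (F₂ x)) = fun x => ∑ k, G k x)
    (Γ : E → ℂ)
    (hΓ : ∀ x, 2 * Γ x =
      L (fun y => F₁ y * (starRingEnd ℂ) (F₂ y)) x
        + ((p₁ + p₂ : ℕ) : ℂ) * (F₁ x * (starRingEnd ℂ) (F₂ x)))
    (hint1 : Integrable (fun x => ‖Γ x‖ ^ 2) μ)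
    (hint2 : Integrable (fun x => (starRingEnd ℂ) (F₁ x) * F₂ x * Γ x) μ) :
    ∫ x, ‖Γ x‖ ^ 2 ∂μ
      ≤ ((p₁ + p₂ : ℝ) / 2) * (∫ x, (starRingEnd ℂ) (F₁ x) * F₂ x * Γ x ∂μ).re := by
  have h := ChaosAux.key μ L hsa (p₁ + p₂) F₁ F₂ G hGeig hchaos Γ hΓ hint1 hint2
  have hc : (((p₁ + p₂ : ℕ) : ℝ)) = ((p₁ : ℝ) + (p₂ : ℝ)) := by push_cast; ring
  rw [hc] at h
  exact h
end

section
/- Orthogonality of complex Hermite polynomials: for the standard complex Gaussian measure γ with density (1/π)e^{-|z|²} on ℂ, the polynomials H_{p,q} satisfy ∫ H_{p,q}(z)·conj(H_{p',q'}(z)) dγ(z) = 0 whenever (p,q) ≠ (p',q'), and ∫ |H_{p,q}(z)|² dγ(z) = p!·q!. -/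
open MeasureTheory
open scoped BigOperators NNReal ENNReal

/-- The standard complex Gaussian measure on ℂ, with density (1/π)exp(-|z|²). -/
noncomputable def stdComplexGaussian : Measure ℂ :=
  volume.withDensity fun z => ENNReal.ofReal (Real.exp (-(‖z‖) ^ 2) / Real.pi)

/-- The complex Hermite polynomial H_{p,q}. -/
noncomputable def complexHermite (p q : ℕ) (z : ℂ) : ℂ :=
  ∑ j ∈ Finset.range (min p q + 1),
    (p.choose j : ℂ) * (q.choose j : ℂ) * (j.factorial : ℂ) * (-1) ^ j
      * z ^ (p - j) * (starRingEnd ℂ) z ^ (q - j)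

lemma hermite_eq_sum (p q n : ℕ) (hn : min p q + 1 ≤ n) (z : ℂ) :
    complexHermite p q z = ∑ j ∈ Finset.range n,
      (p.choose j : ℂ) * (q.choose j : ℂ) * (j.factorial : ℂ) * (-1) ^ j
        * z ^ (p - j) * (starRingEnd ℂ) z ^ (q - j) := by
  rw [complexHermite]
  refine Finset.sum_subset (Finset.range_subset_range.2 hn) (fun j hj hj' => ?_)
  simp only [Finset.mem_range, not_lt] at hj'
  have : p.choose j = 0 ∨ q.choose j = 0 := by
    rcases Nat.lt_or_ge p q with h | h
    · exact Or.inl (Nat.choose_eq_zero_of_lt (by omega))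
    · exact Or.inr (Nat.choose_eq_zero_of_lt (by omega))
  rcases this with h | h <;> simp [h]

lemma hermite_zero_right (p : ℕ) (z : ℂ) : complexHermite p 0 z = z ^ p := by
  simp [complexHermite]

lemma hermite_conj (p q : ℕ) (z : ℂ) :
    (starRingEnd ℂ) (complexHermite p q z) = complexHermite q p z := by
  rw [complexHermite, complexHermite, map_sum, Nat.min_comm]
  refine Finset.sum_congr rfl (fun j _ => ?_)
  simp only [map_mul, map_pow, map_natCast, map_neg, map_one, Complex.conj_conj]
  ring

lemma hermite_zero_left (q : ℕ) (z : ℂ) :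
    complexHermite 0 q z = (starRingEnd ℂ) z ^ q := by
  rw [← hermite_conj, hermite_zero_right, map_pow]

lemma choose_aux (Q j : ℕ) :
    (Q+1).choose (j+1) * (j+1).factorial = (Q+1) * (Q.choose j * j.factorial) := by
  have h := Nat.add_one_mul_choose_eq Q j
  rw [Nat.factorial_succ, ← mul_assoc]
  rw [show (Q+1).choose (j+1) * (j+1) = (Q+1) * Q.choose j from h.symm]
  ring

lemma choose_key (p Q j : ℕ) :
    (p+1).choose (j+1) * ((Q+1).choose (j+1) * (j+1).factorial) =
      p.choose (j+1) * ((Q+1).choose (j+1) * (j+1).factorial)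
      + (Q+1) * (p.choose j * (Q.choose j * j.factorial)) := by
  rw [Nat.choose_succ_succ p j, add_mul, choose_aux]
  ring

lemma hermite_rec1 (p q : ℕ) (z : ℂ) :
    complexHermite (p+1) q z
      = z * complexHermite p q z - (q : ℂ) * complexHermite p (q-1) z := by
  rcases q with _ | Q
  · simp [hermite_zero_right, pow_succ, mul_comm]
  · simp only [Nat.add_sub_cancel]
    rw [hermite_eq_sum (p+1) (Q+1) (Q+2) (by omega),
        hermite_eq_sum p (Q+1) (Q+2) (by omega),
        hermite_eq_sum p Q (Q+1) (by omega)]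
    set w := (starRingEnd ℂ) z with hw
    have key : ∀ i ∈ Finset.range (Q+1),
        ((p+1).choose (i+1) : ℂ) * ((Q+1).choose (i+1) : ℂ) * ((i+1).factorial : ℂ)
            * (-1) ^ (i+1) * z ^ (p+1-(i+1)) * w ^ (Q+1-(i+1))
          = z * ((p.choose (i+1) : ℂ) * ((Q+1).choose (i+1) : ℂ) * ((i+1).factorial : ℂ)
              * (-1) ^ (i+1) * z ^ (p-(i+1)) * w ^ (Q+1-(i+1)))
            - ((Q:ℂ)+1) * ((p.choose i : ℂ) * (Q.choose i : ℂ) * (i.factorial : ℂ)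
              * (-1) ^ i * z ^ (p-i) * w ^ (Q-i)) := by
      intro i _
      have hc : (((p+1).choose (i+1) : ℂ)) * (((Q+1).choose (i+1) : ℂ) * ((i+1).factorial : ℂ))
          = ((p.choose (i+1) : ℂ)) * (((Q+1).choose (i+1) : ℂ) * ((i+1).factorial : ℂ))
            + ((Q:ℂ)+1) * ((p.choose i : ℂ) * ((Q.choose i : ℂ) * (i.factorial : ℂ))) := by
        exact_mod_cast choose_key p Q i
      simp only [Nat.succ_sub_succ]
      rcases le_or_gt (i+1) p with hip | hip
      · have hz : z * z ^ (p-(i+1)) = z ^ (p-i) := by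
          rw [← pow_succ']; congr 1; omega
        linear_combination ((-1:ℂ)^(i+1) * z^(p-i) * w^(Q-i)) * hc
          + ((p.choose (i+1) : ℂ) * ((Q+1).choose (i+1) : ℂ) * ((i+1).factorial : ℂ)
              * (-1)^i * w^(Q-i)) * hz
      · have h1 : p.choose (i+1) = 0 := Nat.choose_eq_zero_of_lt hip
        have h2 : p - i = 0 := by omega
        have h3 : p - (i+1) = 0 := by omega
        simp only [h1, h2, h3] at hc ⊢
        push_cast at hc ⊢
        linear_combination ((-1:ℂ)^(i+1) * w^(Q-i)) * hc
    rw [Finset.sum_range_succ']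
    conv_rhs => rw [Finset.sum_range_succ']
    rw [Finset.sum_congr rfl key, Finset.sum_sub_distrib, mul_add, Finset.mul_sum,
        Finset.mul_sum]
    simp only [Nat.choose_zero_right, Nat.factorial_zero, Nat.sub_zero, Nat.cast_one, pow_zero]
    push_cast
    ring

open MeasureTheory Real
open scoped BigOperators

noncomputable def gden (z : ℂ) : ℝ := Real.exp (-‖z‖ ^ 2) / Real.pi

lemma gden_nonneg (z : ℂ) : 0 ≤ gden z :=
  div_nonneg (Real.exp_nonneg _) Real.pi_pos.le

lemma gden_continuous : Continuous gden :=
  ((continuous_norm.pow 2).neg.rexp).div_const _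

lemma moment (a b : ℕ) :
    (∫ z : ℂ, z ^ a * (starRingEnd ℂ) z ^ b * (gden z : ℂ))
      = if a = b then (a.factorial : ℂ) else 0 := by
  rw [← Complex.integral_comp_polarCoord_symm]
  have htgt : polarCoord.target = Set.Ioi (0:ℝ) ×ˢ Set.Ioo (-π) π := rfl
  have hcong : ∀ p ∈ polarCoord.target,
      p.1 • ((Complex.polarCoord.symm p) ^ a
          * (starRingEnd ℂ) (Complex.polarCoord.symm p) ^ b
          * (gden (Complex.polarCoord.symm p) : ℂ))
        = (fun r : ℝ => ((r ^ (a+b+1) * Real.exp (-r^2) / Real.pi : ℝ) : ℂ)) p.1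
          * (fun θ : ℝ => Complex.exp ((((a:ℂ) - b) * Complex.I) * θ)) p.2 := by
    rintro ⟨r, θ⟩ hp
    rw [htgt] at hp
    have hr : 0 < r := hp.1
    have h1 : Complex.polarCoord.symm (r, θ) = (r:ℂ) * Complex.exp (θ * Complex.I) := by
      rw [Complex.polarCoord_symm_apply, Complex.exp_mul_I]
      simp [Complex.ofReal_cos, Complex.ofReal_sin]
    have h2 : (starRingEnd ℂ) (Complex.polarCoord.symm (r, θ))
        = (r:ℂ) * Complex.exp (-θ * Complex.I) := by
      rw [h1, map_mul, Complex.conj_ofReal, ← Complex.exp_conj, map_mul,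
        Complex.conj_ofReal, Complex.conj_I,
        show (θ:ℂ) * -Complex.I = -θ * Complex.I by ring]
    have habs : ‖Complex.polarCoord.symm (r, θ)‖ = r := by
      rw [Complex.norm_polarCoord_symm]; exact abs_of_pos hr
    have hE : Complex.exp ((a:ℂ) * ((θ:ℂ) * Complex.I))
          * Complex.exp ((b:ℂ) * (-(θ:ℂ) * Complex.I))
        = Complex.exp ((((a:ℂ) - b) * Complex.I) * θ) := by
      rw [← Complex.exp_add]; ring_nf
    simp only [gden, habs]
    rw [h2, h1, mul_pow, mul_pow, ← Complex.exp_nat_mul, ← Complex.exp_nat_mul]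
    simp only [Complex.real_smul, Complex.ofReal_div, Complex.ofReal_mul,
      Complex.ofReal_pow, Complex.ofReal_exp, Complex.ofReal_neg]
    linear_combination ((r:ℂ)^(a+b+1) * Complex.exp (-(r:ℂ)^2) / (Real.pi:ℂ)) * hE
  rw [setIntegral_congr_fun polarCoord.open_target.measurableSet hcong]
  rw [htgt]
  have hsplit := setIntegral_prod_mul (μ := volume) (ν := volume)
    (fun r : ℝ => ((r ^ (a+b+1) * Real.exp (-r^2) / Real.pi : ℝ) : ℂ))
    (fun θ : ℝ => Complex.exp ((((a:ℂ) - b) * Complex.I) * θ))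
    (Set.Ioi 0) (Set.Ioo (-π) π)
  rw [← Measure.volume_eq_prod] at hsplit
  rw [hsplit]
  have hrad : (∫ r in Set.Ioi (0:ℝ), ((r ^ (a+b+1) * Real.exp (-r^2) / Real.pi : ℝ) : ℂ))
      = ((Real.Gamma ((a+b+2)/2) / (2*Real.pi) : ℝ) : ℂ) := by
    have hreal : (∫ r in Set.Ioi (0:ℝ), r ^ (a+b+1) * Real.exp (-r^2) / Real.pi)
        = Real.Gamma (((a:ℝ)+(b:ℝ)+2)/2) / (2*Real.pi) := by
      have h1 : ∫ r in Set.Ioi (0:ℝ), r ^ (a+b+1) * Real.exp (-r^2) / Real.pi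
          = (∫ r in Set.Ioi (0:ℝ), r ^ (a+b+1) * Real.exp (-r^2)) / Real.pi :=
        integral_div _ _
      have h2 : ∫ r in Set.Ioi (0:ℝ), r ^ (a+b+1) * Real.exp (-r^2)
          = (1/2) * Real.Gamma ((((a+b+1):ℕ) + 1) / 2) := by
        have h3 := integral_rpow_mul_exp_neg_rpow (p := 2) (q := ((a+b+1 : ℕ) : ℝ))
          two_pos (lt_of_lt_of_le (by norm_num) (Nat.cast_nonneg _))
        rw [← h3]
        refine setIntegral_congr_fun measurableSet_Ioi (fun x hx => ?_)
        rw [Real.rpow_natCast, show (2:ℝ) = ((2:ℕ):ℝ) by norm_num, Real.rpow_natCast]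
      rw [h1, h2, show (((a+b+1:ℕ)):ℝ) + 1 = ((a:ℝ)+(b:ℝ)+2) by push_cast; ring]
      ring
    calc (∫ r in Set.Ioi (0:ℝ), ((r ^ (a+b+1) * Real.exp (-r^2) / Real.pi : ℝ) : ℂ))
        = ((∫ r in Set.Ioi (0:ℝ), r ^ (a+b+1) * Real.exp (-r^2) / Real.pi : ℝ) : ℂ) :=
          integral_ofReal
      _ = _ := by rw [hreal]
  rw [hrad]
  rcases eq_or_ne a b with hab | hab
  · subst hab
    rw [if_pos rfl]
    have hang : (∫ θ in Set.Ioo (-π) π, Complex.exp ((((a:ℂ) - a) * Complex.I) * θ))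
        = ((2*π : ℝ) : ℂ) := by
      simp only [sub_self, zero_mul, Complex.exp_zero]
      rw [setIntegral_const]
      rw [measureReal_def, Real.volume_Ioo, ENNReal.toReal_ofReal (by linarith [Real.pi_pos])]
      rw [Complex.real_smul]
      push_cast
      ring
    rw [hang]
    have : ((a:ℝ) + a + 2)/2 = a + 1 := by ring
    rw [this, Real.Gamma_nat_eq_factorial]
    have hπ : (Real.pi : ℂ) ≠ 0 := by exact_mod_cast Real.pi_ne_zero
    push_cast
    field_simp
  · rw [if_neg hab]
    have hc : ((a:ℂ) - b) * Complex.I ≠ 0 := by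
      refine mul_ne_zero (sub_ne_zero.2 ?_) Complex.I_ne_zero
      exact_mod_cast fun h => hab (Nat.cast_injective h)
    have hang : (∫ θ in Set.Ioo (-π) π, Complex.exp ((((a:ℂ) - b) * Complex.I) * θ)) = 0 := by
      rw [← integral_Ioc_eq_integral_Ioo,
        ← intervalIntegral.integral_of_le (by linarith [Real.pi_pos])]
      rw [integral_exp_mul_complex hc]
      have hee : Complex.exp (((a:ℂ) - b) * Complex.I * (π:ℝ))
          = Complex.exp (((a:ℂ) - b) * Complex.I * ((-π : ℝ):ℂ)) := by
        rw [Complex.exp_eq_exp_iff_exists_int]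
        exact ⟨(a:ℤ) - b, by push_cast; ring⟩
      rw [hee, sub_self, zero_div]
    rw [hang, mul_zero]
open MeasureTheory Real

lemma integrable_gauss : Integrable (fun v : ℂ => Real.exp (-(1/2) * ‖v‖^2)) := by
  have h := (GaussianFourier.integrable_cexp_neg_mul_sq_norm_add (V := ℂ) (b := (1/2:ℂ)) (by norm_num) 0 0)
  refine h.norm.congr (Filter.Eventually.of_forall fun v => ?_)
  show ‖Complex.exp _‖ = _
  rw [Complex.norm_exp,
    show (-(1/2:ℂ) * ((‖v‖:ℝ):ℂ)^2 + 0 * ((inner ℝ (0:ℂ) v : ℝ) : ℂ))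
      = ((-(1/2) * ‖v‖^2 : ℝ) : ℂ) by push_cast; ring, Complex.ofReal_re]

lemma integrable_monomial (m n : ℕ) :
    Integrable (fun z : ℂ => z ^ m * (starRingEnd ℂ) z ^ n * (gden z : ℂ)) := by
  set k := m + n with hk
  set C := (k.factorial : ℝ) * Real.exp (1/2) / Real.pi with hC
  refine Integrable.mono' (g := fun z => C * Real.exp (-(1/2) * ‖z‖^2))
    (integrable_gauss.const_mul C) ?_ (Filter.Eventually.of_forall fun z => ?_)
  · exact (((continuous_pow m).mul (Complex.continuous_conj.pow n)).mul
      (Complex.continuous_ofReal.comp gden_continuous)).aestronglyMeasurable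
  · have hnorm : ‖z ^ m * (starRingEnd ℂ) z ^ n * (gden z : ℂ)‖
        = ‖z‖ ^ k * gden z := by
      rw [norm_mul, norm_mul, norm_pow, norm_pow, RCLike.norm_conj,
        Complex.norm_real, Real.norm_eq_abs, abs_of_nonneg (gden_nonneg z), hk, pow_add]
    rw [hnorm]
    have h1 : ‖z‖ ^ k ≤ k.factorial * Real.exp ‖z‖ := by
      have hs := Real.sum_le_exp_of_nonneg (norm_nonneg z) (k+1)
      have h2 : ‖z‖ ^ k / k.factorial ≤ Real.exp ‖z‖ := by
        refine le_trans ?_ hs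
        exact Finset.single_le_sum (f := fun i => ‖z‖ ^ i / i.factorial)
          (fun i _ => by positivity) (Finset.self_mem_range_succ k)
      have hf : (0:ℝ) < k.factorial := by exact_mod_cast k.factorial_pos
      calc ‖z‖ ^ k = (‖z‖ ^ k / k.factorial) * k.factorial := by field_simp
        _ ≤ Real.exp ‖z‖ * k.factorial := by
            exact mul_le_mul_of_nonneg_right h2 hf.le
        _ = k.factorial * Real.exp ‖z‖ := by ring
    have h2 : Real.exp ‖z‖ ≤ Real.exp (1/2 + ‖z‖^2/2) :=
      Real.exp_le_exp.2 (by nlinarith [sq_nonneg (‖z‖ - 1)])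
    rw [gden]
    have hπ := Real.pi_pos
    have key : ‖z‖ ^ k * (Real.exp (-‖z‖^2)/Real.pi)
        ≤ (k.factorial * Real.exp (1/2 + ‖z‖^2/2)) * (Real.exp (-‖z‖^2)/Real.pi) := by
      apply mul_le_mul_of_nonneg_right (le_trans h1 (by nlinarith [Real.exp_pos ‖z‖]))
      positivity
    refine le_trans key (le_of_eq ?_)
    show (k.factorial : ℝ) * Real.exp (1/2 + ‖z‖^2/2) * (Real.exp (-‖z‖^2)/Real.pi)
        = C * Real.exp (-(1/2) * ‖z‖^2)
    have hee : Real.exp (1/2 + ‖z‖^2/2) * Real.exp (-‖z‖^2)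
        = Real.exp (1/2) * Real.exp (-(1/2)*‖z‖^2) := by
      rw [← Real.exp_add, ← Real.exp_add]; ring_nf
    rw [hC]
    linear_combination ((k.factorial : ℝ)/Real.pi) * hee

lemma hermite_rec2 (p q : ℕ) (z : ℂ) :
    complexHermite p (q+1) z
      = (starRingEnd ℂ) z * complexHermite p q z
        - (p : ℂ) * complexHermite (p-1) q z := by
  have h := congrArg (starRingEnd ℂ) (hermite_rec1 q p z)
  simpa only [map_sub, map_mul, map_natCast, hermite_conj] using h

lemma integrable_hermite_pair (a b c d : ℕ) :
    Integrable (fun z : ℂ =>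
      complexHermite a b z * complexHermite c d z * (gden z : ℂ)) := by
  have heq : (fun z : ℂ => complexHermite a b z * complexHermite c d z * (gden z : ℂ))
      = fun z => ∑ j ∈ Finset.range (min a b + 1), ∑ k ∈ Finset.range (min c d + 1),
        ((a.choose j : ℂ) * (b.choose j : ℂ) * (j.factorial : ℂ) * (-1) ^ j
          * ((c.choose k : ℂ) * (d.choose k : ℂ) * (k.factorial : ℂ) * (-1) ^ k))
          * (z ^ ((a-j)+(c-k)) * (starRingEnd ℂ) z ^ ((b-j)+(d-k)) * (gden z : ℂ)) := by
    funext z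
    rw [complexHermite, complexHermite, Finset.sum_mul_sum, Finset.sum_mul]
    refine Finset.sum_congr rfl fun j _ => ?_
    rw [Finset.sum_mul]
    refine Finset.sum_congr rfl fun k _ => ?_
    rw [pow_add, pow_add]
    ring
  rw [heq]
  exact integrable_finset_sum _ fun j _ => integrable_finset_sum _ fun k _ =>
    (integrable_monomial _ _).const_mul _

noncomputable def Pint (a b c d : ℕ) : ℂ :=
  ∫ z : ℂ, complexHermite a b z * complexHermite c d z * (gden z : ℂ)

lemma Pint_recA (p q c d : ℕ) :
    Pint (p+1) q c d
      = Pint p q (c+1) d + (d:ℂ) * Pint p q c (d-1) - (q:ℂ) * Pint p (q-1) c d := by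
  unfold Pint
  have hA : Integrable (fun z : ℂ =>
      complexHermite p q z * complexHermite (c+1) d z * (gden z : ℂ)
        + (d:ℂ) * (complexHermite p q z * complexHermite c (d-1) z * (gden z : ℂ))) :=
    (integrable_hermite_pair _ _ _ _).add
      ((integrable_hermite_pair _ _ _ _).const_mul _)
  have hB : Integrable (fun z : ℂ =>
      (q:ℂ) * (complexHermite p (q-1) z * complexHermite c d z * (gden z : ℂ))) :=
    (integrable_hermite_pair _ _ _ _).const_mul _
  rw [← integral_const_mul, ← integral_const_mul,
    ← integral_add (integrable_hermite_pair _ _ _ _)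
      ((integrable_hermite_pair _ _ _ _).const_mul _),
    ← integral_sub hA hB]
  congr 1
  funext z
  have h1 := hermite_rec1 p q z
  have h2 := hermite_rec1 c d z
  linear_combination (complexHermite c d z * (gden z : ℂ)) * h1
    - (complexHermite p q z * (gden z : ℂ)) * h2

lemma Pint_recD (a b c d : ℕ) :
    Pint a b c (d+1)
      = Pint a (b+1) c d + (a:ℂ) * Pint (a-1) b c d - (c:ℂ) * Pint a b (c-1) d := by
  unfold Pint
  have hA : Integrable (fun z : ℂ =>
      complexHermite a (b+1) z * complexHermite c d z * (gden z : ℂ)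
        + (a:ℂ) * (complexHermite (a-1) b z * complexHermite c d z * (gden z : ℂ))) :=
    (integrable_hermite_pair _ _ _ _).add
      ((integrable_hermite_pair _ _ _ _).const_mul _)
  have hB : Integrable (fun z : ℂ =>
      (c:ℂ) * (complexHermite a b z * complexHermite (c-1) d z * (gden z : ℂ))) :=
    (integrable_hermite_pair _ _ _ _).const_mul _
  rw [← integral_const_mul, ← integral_const_mul,
    ← integral_add (integrable_hermite_pair _ _ _ _)
      ((integrable_hermite_pair _ _ _ _).const_mul _),
    ← integral_sub hA hB]
  congr 1
  funext z
  have h1 := hermite_rec2 c d z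
  have h2 := hermite_rec2 a b z
  linear_combination (complexHermite a b z * (gden z : ℂ)) * h1
    - (complexHermite c d z * (gden z : ℂ)) * h2

lemma Pint_base (b c : ℕ) : Pint 0 b c 0 = if b = c then (b.factorial : ℂ) else 0 := by
  unfold Pint
  have heq : (fun z : ℂ => complexHermite 0 b z * complexHermite c 0 z * (gden z : ℂ))
      = fun z : ℂ => z ^ c * (starRingEnd ℂ) z ^ b * (gden z : ℂ) := by
    funext z
    rw [hermite_zero_left, hermite_zero_right]
    ring
  rw [heq, moment c b]
  rcases eq_or_ne b c with h | h
  · subst h; simp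
  · rw [if_neg (Ne.symm h), if_neg h]

lemma Pint_zero (d : ℕ) : ∀ b c, Pint 0 b c d
    = if 0 = d ∧ b = c then (b.factorial : ℂ) else 0 := by
  induction d with
  | zero =>
    intro b c
    rw [Pint_base]
    by_cases h : b = c <;> simp [h]
  | succ d ih =>
    intro b c
    rw [Pint_recD 0 b c d, ih (b+1) c, ih b (c-1)]
    simp only [Nat.cast_zero, zero_mul, add_zero]
    split_ifs <;>
      first
      | (exfalso; omega)
      | (have h4 : c = b + 1 := (by omega); rw [h4];
         push_cast [Nat.factorial_succ]; ring)
      | (have h4 : c = 0 := (by omega); rw [h4]; simp; done)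
      | (simp; done)
      | (exfalso; exact (‹False ∧ b = c›).1)

lemma Pint_eq (a : ℕ) : ∀ b c d, Pint a b c d
    = if a = d ∧ b = c then ((a.factorial : ℂ) * (b.factorial : ℂ)) else 0 := by
  induction a with
  | zero =>
    intro b c d
    rw [Pint_zero d b c]
    split_ifs <;> simp
  | succ p ih =>
    intro b c d
    rw [Pint_recA p b c d, ih, ih, ih]
    split_ifs <;>
      first
      | (exfalso; omega)
      | (have h4 : d = p + 1 := (by omega); rw [h4];
         push_cast [Nat.factorial_succ]; ring)
      | (have h4 : b = c + 1 := (by omega); have h5 : b - 1 = c := (by omega);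
         rw [h5, h4]; push_cast [Nat.factorial_succ]; ring)
      | (have h4 : d = 0 := (by omega); have h5 : b = 0 := (by omega);
         rw [h4, h5]; simp; done)
      | (have h4 : d = 0 := (by omega); rw [h4]; simp; done)
      | (have h4 : b = 0 := (by omega); rw [h4]; simp; done)
      | (simp; done)

lemma stdComplexGaussian_eq :
    stdComplexGaussian = volume.withDensity fun z => ((Real.toNNReal (gden z) : ℝ≥0) : ℝ≥0∞) :=
  rfl

lemma gden_toNNReal_measurable : Measurable fun z : ℂ => Real.toNNReal (gden z) :=
  (continuous_real_toNNReal.comp gden_continuous).measurable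

/-- Orthogonality of the complex Hermite polynomials with respect to the
standard complex Gaussian measure, and ∫|H_{p,q}|² dγ = p!q!. -/
theorem complexHermite_orthogonality (p q p' q' : ℕ) :
    ((p, q) ≠ (p', q') →
      ∫ z, complexHermite p q z * (starRingEnd ℂ) (complexHermite p' q' z)
        ∂stdComplexGaussian = 0) ∧
    (∫ z, ‖complexHermite p q z‖ ^ 2 ∂stdComplexGaussian
      = p.factorial * q.factorial) := by
  constructor
  · intro hne
    rw [stdComplexGaussian_eq, integral_withDensity_eq_integral_smul gden_toNNReal_measurable]
    have heq : (fun z : ℂ => Real.toNNReal (gden z)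
          • (complexHermite p q z * (starRingEnd ℂ) (complexHermite p' q' z)))
        = fun z : ℂ => complexHermite p q z * complexHermite q' p' z * (gden z : ℂ) := by
      funext z
      rw [NNReal.smul_def, Real.coe_toNNReal _ (gden_nonneg z), Complex.real_smul,
        hermite_conj]
      ring
    rw [heq]
    rw [show (∫ z : ℂ, complexHermite p q z * complexHermite q' p' z * (gden z : ℂ))
        = Pint p q q' p' from rfl, Pint_eq p q q' p', if_neg]
    intro h
    exact hne (by simp [Prod.ext_iff, h.1, h.2])
  · rw [stdComplexGaussian_eq, integral_withDensity_eq_integral_smul gden_toNNReal_measurable]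
    have heq : (fun z : ℂ => Real.toNNReal (gden z) • (‖complexHermite p q z‖ ^ 2))
        = fun z : ℂ => ‖complexHermite p q z‖ ^ 2 * gden z := by
      funext z
      rw [NNReal.smul_def, Real.coe_toNNReal _ (gden_nonneg z), smul_eq_mul]
      ring
    rw [heq]
    have hP : Pint p q q p = ((p.factorial : ℂ) * (q.factorial : ℂ)) := by
      rw [Pint_eq p q q p, if_pos ⟨rfl, rfl⟩]
    have hre : ((∫ z : ℂ, ‖complexHermite p q z‖ ^ 2 * gden z : ℝ) : ℂ)
        = Pint p q q p := by
      rw [show ((∫ z : ℂ, ‖complexHermite p q z‖ ^ 2 * gden z : ℝ) : ℂ)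
          = ∫ z : ℂ, ((‖complexHermite p q z‖ ^ 2 * gden z : ℝ) : ℂ)
        from integral_ofReal.symm]
      unfold Pint
      congr 1
      funext z
      rw [← hermite_conj p q z, Complex.mul_conj, Complex.ofReal_mul, Complex.sq_norm]
    rw [hP] at hre
    exact_mod_cast hre
end
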